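/- Let Σ1, Σ2 be symmetric positive semidefinite d×d matrices. Then trace((Σ1^{1/2} Σ2 Σ1^{1/2})^{1/2}) ≤ (1/4)·‖Σ1^{1/2} + Σ2^{1/2}‖_F², where ‖·‖_F is the Frobenius norm. Equivalently, the sum of singular values of Σ1^{1/2} Σ2^{1/2} is bounded by (1/4)·trace((Σ1^{1/2}+Σ2^{1/2})²). -/

import Mathlib

open MeasureTheory Matrix

/- The positive semidefinite square root of a positive semidefinite matrix
(`Matrix.PosSemidef.sqrt`, removed from Mathlib; restored with its old definition). -/
open scoped ComplexOrder in
noncomputable def Matrix.PosSemidef.sqrt {n 𝕜 : Type*} [Fintype n] [DecidableEq n] [RCLike 𝕜]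
    {A : Matrix n n 𝕜} (hA : A.PosSemidef) : Matrix n n 𝕜 :=
  hA.1.eigenvectorUnitary.1 * diagonal (fun i => ((hA.1.eigenvalues i).sqrt : 𝕜)) *
    (star hA.1.eigenvectorUnitary : Matrix n n 𝕜)

noncomputable def frob {d : ℕ} (M : Matrix (Fin d) (Fin d) ℝ) : ℝ :=
  Real.sqrt (∑ i, ∑ j, M i j ^ 2)

lemma Matrix.PosSemidef.posSemidef_sqrt {d : ℕ} {A : Matrix (Fin d) (Fin d) ℝ}
    (hA : A.PosSemidef) : hA.sqrt.PosSemidef := by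
  unfold Matrix.PosSemidef.sqrt
  have hD : (diagonal (fun i => ((hA.1.eigenvalues i).sqrt : ℝ))).PosSemidef :=
    Matrix.posSemidef_diagonal_iff.mpr fun i => Real.sqrt_nonneg _
  have := hD.mul_mul_conjTranspose_same (hA.1.eigenvectorUnitary : Matrix (Fin d) (Fin d) ℝ)
  simpa [Matrix.star_eq_conjTranspose] using this

lemma Matrix.PosSemidef.sqrt_mul_self {d : ℕ} {A : Matrix (Fin d) (Fin d) ℝ}
    (hA : A.PosSemidef) : hA.sqrt * hA.sqrt = A := by
  have hU : (star (hA.1.eigenvectorUnitary : Matrix (Fin d) (Fin d) ℝ)) *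
      (hA.1.eigenvectorUnitary : Matrix (Fin d) (Fin d) ℝ) = 1 :=
    Unitary.star_mul_self_of_mem hA.1.eigenvectorUnitary.2
  have hs : (fun i => (hA.1.eigenvalues i).sqrt * (hA.1.eigenvalues i).sqrt) = hA.1.eigenvalues :=
    funext fun i => Real.mul_self_sqrt (hA.eigenvalues_nonneg i)
  conv_rhs => rw [hA.1.spectral_theorem, Unitary.conjStarAlgAut_apply]
  unfold Matrix.PosSemidef.sqrt
  simp only [Unitary.coe_star, Matrix.mul_assoc]
  rw [← Matrix.mul_assoc (star _) (hA.1.eigenvectorUnitary : Matrix (Fin d) (Fin d) ℝ), hU,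
    Matrix.one_mul, ← Matrix.mul_assoc (diagonal _) (diagonal _), diagonal_mul_diagonal]
  congr 3

open scoped MatrixOrder in
lemma Matrix.PosSemidef.eq_sqrt_of_sq_eq {d : ℕ} {A : Matrix (Fin d) (Fin d) ℝ}
    (hA : A.PosSemidef) {B : Matrix (Fin d) (Fin d) ℝ} (hB : B.PosSemidef) (hAB : A ^ 2 = B) :
    A = hB.sqrt := by
  have e1 : CFC.sqrt B = A := CFC.sqrt_unique (by rw [← sq, hAB]) hA.nonneg
  have e2 : CFC.sqrt B = hB.sqrt := CFC.sqrt_unique hB.sqrt_mul_self hB.posSemidef_sqrt.nonneg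
  rw [← e1, e2]

section AMGMaux

variable {d : ℕ}

lemma psd_diag_nonneg {M : Matrix (Fin d) (Fin d) ℝ} (hM : M.PosSemidef) (j : Fin d) :
    0 ≤ M j j := by
  have h := hM.diag_nonneg (i := j)
  exact h

lemma one_sub_proj_psd {Q : Matrix (Fin d) (Fin d) ℝ} (hsym : Qᴴ = Q) (hid : Q * Q = Q) :
    ((1 : Matrix (Fin d) (Fin d) ℝ) - Q).PosSemidef := by
  have h : ((1 : Matrix (Fin d) (Fin d) ℝ) - Q)ᴴ * (1 - Q) = 1 - Q := by
    rw [conjTranspose_sub, hsym, conjTranspose_one]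
    rw [sub_mul, one_mul, mul_sub, mul_one, hid]
    simp
  have := Matrix.posSemidef_conjTranspose_mul_self ((1 : Matrix (Fin d) (Fin d) ℝ) - Q)
  rwa [h] at this

lemma mul_cancel_left' {A B X : Matrix (Fin d) (Fin d) ℝ} (h : A * B = 1) :
    A * (B * X) = X := by rw [← Matrix.mul_assoc, h, Matrix.one_mul]

lemma trace_DGD (a b : Fin d → ℝ) (G K : Matrix (Fin d) (Fin d) ℝ) :
    trace (Kᴴ * diagonal b * G * diagonal a) = ∑ i, ∑ j, a i * b j * G j i * K j i := by
  simp only [Matrix.trace, Matrix.diag, Matrix.mul_apply, diagonal_apply,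
    conjTranspose_apply, star_trivial, mul_ite, ite_mul, mul_zero, zero_mul,
    Finset.sum_ite_eq, Finset.sum_ite_eq', Finset.mem_univ, if_true, Finset.sum_mul,
    Finset.mul_sum]
  exact Finset.sum_congr rfl fun i _ => Finset.sum_congr rfl fun j _ => by ring

lemma trace_helper (a b : Fin d → ℝ) (U V P : Matrix (Fin d) (Fin d) ℝ) :
    trace (Pᴴ * ((V * diagonal b * Vᴴ) * (U * diagonal a * Uᴴ))) =
      ∑ i, ∑ j, a i * b j * (Vᴴ * U) j i * (Vᴴ * P * U) j i := by
  have h1 : Pᴴ * ((V * diagonal b * Vᴴ) * (U * diagonal a * Uᴴ)) =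
      (Pᴴ * (V * (diagonal b * (Vᴴ * (U * diagonal a))))) * Uᴴ := by
    simp only [Matrix.mul_assoc]
  rw [h1, trace_mul_comm]
  have h2 : Uᴴ * (Pᴴ * (V * (diagonal b * (Vᴴ * (U * diagonal a))))) =
      (Vᴴ * P * U)ᴴ * diagonal b * (Vᴴ * U) * diagonal a := by
    simp only [conjTranspose_mul, conjTranspose_conjTranspose, Matrix.mul_assoc]
  rw [h2, trace_DGD]

lemma mul_conjT_diag (K : Matrix (Fin d) (Fin d) ℝ) (j : Fin d) :
    (K * Kᴴ) j j = ∑ i, K j i * K j i := by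
  simp [Matrix.mul_apply, conjTranspose_apply]

lemma conjT_mul_diag (K : Matrix (Fin d) (Fin d) ℝ) (i : Fin d) :
    (Kᴴ * K) i i = ∑ j, K j i * K j i := by
  simp [Matrix.mul_apply, conjTranspose_apply]

lemma key (A B P : Matrix (Fin d) (Fin d) ℝ)
    (hA : A.PosSemidef) (hB : B.PosSemidef)
    (hQ : ((1 : Matrix (Fin d) (Fin d) ℝ) - P * Pᴴ).PosSemidef)
    (hQ' : ((1 : Matrix (Fin d) (Fin d) ℝ) - Pᴴ * P).PosSemidef) :
    trace (Pᴴ * (B * A)) ≤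
      1/4 * trace (A * A) + 1/4 * trace (B * B) + 1/2 * trace (A * B) := by
  set U : Matrix (Fin d) (Fin d) ℝ := (hA.1.eigenvectorUnitary : Matrix (Fin d) (Fin d) ℝ) with hUdef
  set V : Matrix (Fin d) (Fin d) ℝ := (hB.1.eigenvectorUnitary : Matrix (Fin d) (Fin d) ℝ) with hVdef
  set a : Fin d → ℝ := hA.1.eigenvalues with hadef
  set b : Fin d → ℝ := hB.1.eigenvalues with hbdef
  have hUU' : U * Uᴴ = 1 := by
    have h := (Matrix.mem_unitaryGroup_iff).mp hA.1.eigenvectorUnitary.2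
    simpa [Matrix.star_eq_conjTranspose] using h
  have hUU : Uᴴ * U = 1 := mul_eq_one_comm.mp hUU'
  have hVV' : V * Vᴴ = 1 := by
    have h := (Matrix.mem_unitaryGroup_iff).mp hB.1.eigenvectorUnitary.2
    simpa [Matrix.star_eq_conjTranspose] using h
  have hVV : Vᴴ * V = 1 := mul_eq_one_comm.mp hVV'
  have specA : A = U * diagonal a * Uᴴ := by
    have h := hA.1.spectral_theorem
    simpa [Matrix.star_eq_conjTranspose, RCLike.ofReal_real_eq_id] using h
  have specB : B = V * diagonal b * Vᴴ := by
    have h := hB.1.spectral_theorem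
    simpa [Matrix.star_eq_conjTranspose, RCLike.ofReal_real_eq_id] using h
  -- main trace identity
  have tP : trace (Pᴴ * (B * A)) =
      ∑ i, ∑ j, a i * b j * (Vᴴ * U) j i * (Vᴴ * P * U) j i := by
    conv_lhs => rw [specA, specB]
    exact trace_helper a b U V P
  -- trace (A * B)
  have tAB : trace (A * B) = ∑ i, ∑ j, a i * b j * (Vᴴ * U) j i * (Vᴴ * U) j i := by
    have h := trace_helper a b U V 1
    rw [conjTranspose_one, Matrix.one_mul, Matrix.mul_one, ← specA, ← specB,
      trace_mul_comm] at h
    exact h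
  -- trace (A * A)
  have tAA : trace (A * A) = ∑ i, a i * a i := by
    have h := trace_helper a a U U 1
    rw [conjTranspose_one, Matrix.one_mul, Matrix.mul_one, hUU, ← specA] at h
    rw [h]
    simp [Matrix.one_apply]
  have tBB : trace (B * B) = ∑ j, b j * b j := by
    have h := trace_helper b b V V 1
    rw [conjTranspose_one, Matrix.one_mul, Matrix.mul_one, hVV, ← specB] at h
    rw [h]
    simp [Matrix.one_apply]
  -- row and column bounds on K
  have rowb : ∀ j, (∑ i, (Vᴴ * P * U) j i * (Vᴴ * P * U) j i) ≤ 1 := by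
    intro j
    have e2 : (Vᴴ * P * U) * (Vᴴ * P * U)ᴴ = Vᴴ * (P * Pᴴ) * V := by
      simp only [conjTranspose_mul, conjTranspose_conjTranspose, Matrix.mul_assoc]
      rw [mul_cancel_left' hUU']
    have e3 : Vᴴ * ((1 : Matrix (Fin d) (Fin d) ℝ) - P * Pᴴ) * V =
        1 - (Vᴴ * P * U) * (Vᴴ * P * U)ᴴ := by
      rw [e2, Matrix.mul_sub, Matrix.mul_one, Matrix.sub_mul, hVV, Matrix.mul_assoc,
        Matrix.mul_assoc]
    have psd := hQ.conjTranspose_mul_mul_same V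
    rw [e3] at psd
    have hd := psd_diag_nonneg psd j
    have he : ((1 : Matrix (Fin d) (Fin d) ℝ) - (Vᴴ * P * U) * (Vᴴ * P * U)ᴴ) j j
        = 1 - ∑ i, (Vᴴ * P * U) j i * (Vᴴ * P * U) j i := by
      rw [Matrix.sub_apply, mul_conjT_diag, Matrix.one_apply_eq]
    rw [he] at hd
    linarith
  have colb : ∀ i, (∑ j, (Vᴴ * P * U) j i * (Vᴴ * P * U) j i) ≤ 1 := by
    intro i
    have e2 : (Vᴴ * P * U)ᴴ * (Vᴴ * P * U) = Uᴴ * (Pᴴ * P) * U := by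
      simp only [conjTranspose_mul, conjTranspose_conjTranspose, Matrix.mul_assoc]
      rw [mul_cancel_left' hVV']
    have e3 : Uᴴ * ((1 : Matrix (Fin d) (Fin d) ℝ) - Pᴴ * P) * U =
        1 - (Vᴴ * P * U)ᴴ * (Vᴴ * P * U) := by
      rw [e2, Matrix.mul_sub, Matrix.mul_one, Matrix.sub_mul, hUU, Matrix.mul_assoc,
        Matrix.mul_assoc]
    have psd := hQ'.conjTranspose_mul_mul_same U
    rw [e3] at psd
    have hd := psd_diag_nonneg psd i
    have he : ((1 : Matrix (Fin d) (Fin d) ℝ) - (Vᴴ * P * U)ᴴ * (Vᴴ * P * U)) i i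
        = 1 - ∑ j, (Vᴴ * P * U) j i * (Vᴴ * P * U) j i := by
      rw [Matrix.sub_apply, conjT_mul_diag, Matrix.one_apply_eq]
    rw [he] at hd
    linarith
  -- pointwise bound and assembly
  have step : trace (Pᴴ * (B * A)) ≤
      1/2 * (∑ i, ∑ j, a i * b j * (Vᴴ * U) j i * (Vᴴ * U) j i)
        + (1/4 * (∑ i, ∑ j, a i * a i * ((Vᴴ * P * U) j i * (Vᴴ * P * U) j i))
          + 1/4 * (∑ i, ∑ j, b j * b j * ((Vᴴ * P * U) j i * (Vᴴ * P * U) j i))) := by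
    rw [tP]
    have hpt : ∀ i j, a i * b j * (Vᴴ * U) j i * (Vᴴ * P * U) j i ≤
        1/2 * (a i * b j * (Vᴴ * U) j i * (Vᴴ * U) j i)
          + (1/4 * (a i * a i * ((Vᴴ * P * U) j i * (Vᴴ * P * U) j i))
            + 1/4 * (b j * b j * ((Vᴴ * P * U) j i * (Vᴴ * P * U) j i))) := by
      intro i j
      have ha := hA.eigenvalues_nonneg i
      have hb := hB.eigenvalues_nonneg j
      nlinarith [mul_nonneg (mul_nonneg ha hb) (sq_nonneg ((Vᴴ * U) j i - (Vᴴ * P * U) j i)),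
        mul_nonneg (sq_nonneg (a i - b j)) (sq_nonneg ((Vᴴ * P * U) j i))]
    calc (∑ i, ∑ j, a i * b j * (Vᴴ * U) j i * (Vᴴ * P * U) j i)
        ≤ ∑ i, ∑ j, (1/2 * (a i * b j * (Vᴴ * U) j i * (Vᴴ * U) j i)
          + (1/4 * (a i * a i * ((Vᴴ * P * U) j i * (Vᴴ * P * U) j i))
            + 1/4 * (b j * b j * ((Vᴴ * P * U) j i * (Vᴴ * P * U) j i)))) := by
          exact Finset.sum_le_sum fun i _ => Finset.sum_le_sum fun j _ => hpt i j
      _ = 1/2 * (∑ i, ∑ j, a i * b j * (Vᴴ * U) j i * (Vᴴ * U) j i)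
        + (1/4 * (∑ i, ∑ j, a i * a i * ((Vᴴ * P * U) j i * (Vᴴ * P * U) j i))
          + 1/4 * (∑ i, ∑ j, b j * b j * ((Vᴴ * P * U) j i * (Vᴴ * P * U) j i))) := by
          simp only [Finset.sum_add_distrib, Finset.mul_sum]
  have hS2 : (∑ i, ∑ j, a i * a i * ((Vᴴ * P * U) j i * (Vᴴ * P * U) j i)) ≤ ∑ i, a i * a i := by
    apply Finset.sum_le_sum
    intro i _
    rw [← Finset.mul_sum]
    calc a i * a i * (∑ j, (Vᴴ * P * U) j i * (Vᴴ * P * U) j i)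
        ≤ a i * a i * 1 := by
          apply mul_le_mul_of_nonneg_left (colb i)
          exact mul_self_nonneg _
      _ = a i * a i := mul_one _
  have hS3 : (∑ i, ∑ j, b j * b j * ((Vᴴ * P * U) j i * (Vᴴ * P * U) j i)) ≤ ∑ j, b j * b j := by
    rw [Finset.sum_comm]
    apply Finset.sum_le_sum
    intro j _
    rw [← Finset.mul_sum]
    calc b j * b j * (∑ i, (Vᴴ * P * U) j i * (Vᴴ * P * U) j i)
        ≤ b j * b j * 1 := by
          apply mul_le_mul_of_nonneg_left (rowb j)
          exact mul_self_nonneg _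
      _ = b j * b j := mul_one _
  rw [tAA, tBB, tAB]
  linarith


end AMGMaux

theorem stmt5 {d : ℕ} (S1 S2 : Matrix (Fin d) (Fin d) ℝ)
    (h1 : S1.PosSemidef) (h2 : S2.PosSemidef)
    (h12 : (h1.sqrt * S2 * h1.sqrt).PosSemidef) :
    h12.sqrt.trace ≤ (1 / 4) * frob (h1.sqrt + h2.sqrt) ^ 2 := by
  set A := h1.sqrt with hAdef
  set B := h2.sqrt with hBdef
  have hA : A.PosSemidef := h1.posSemidef_sqrt
  have hB : B.PosSemidef := h2.posSemidef_sqrt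
  set W : Matrix (Fin d) (Fin d) ℝ := (h12.1.eigenvectorUnitary : Matrix (Fin d) (Fin d) ℝ)
    with hWdef
  set μ : Fin d → ℝ := h12.1.eigenvalues with hμdef
  have hWW' : W * Wᴴ = 1 := by
    have h := (Matrix.mem_unitaryGroup_iff).mp h12.1.eigenvectorUnitary.2
    simpa [Matrix.star_eq_conjTranspose] using h
  have hWW : Wᴴ * W = 1 := mul_eq_one_comm.mp hWW'
  have μnn : ∀ k, 0 ≤ μ k := fun k => h12.eigenvalues_nonneg k
  have specN : A * S2 * A = W * diagonal μ * Wᴴ := by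
    have h := h12.1.spectral_theorem
    simpa [Matrix.star_eq_conjTranspose, RCLike.ofReal_real_eq_id] using h
  have diagN : Wᴴ * (A * S2 * A) * W = diagonal μ := by
    rw [specN]
    simp only [Matrix.mul_assoc]
    rw [hWW, Matrix.mul_one, ← Matrix.mul_assoc, hWW, Matrix.one_mul]
  set C := B * A with hCdef
  have hCC : Cᴴ * C = A * S2 * A := by
    have hBB : B * B = S2 := h2.sqrt_mul_self
    have hCt : Cᴴ = A * B := by
      rw [hCdef, conjTranspose_mul, hA.1, hB.1]
    rw [hCt, hCdef, show A * B * (B * A) = A * (B * B) * A by simp only [Matrix.mul_assoc],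
      hBB]
  set g : Fin d → ℝ := fun k => if μ k = 0 then 0 else (Real.sqrt (μ k))⁻¹ with hgdef
  set e : Fin d → ℝ := fun k => if μ k = 0 then 0 else 1 with hedef
  set Z := C * W * diagonal g with hZdef
  set P := Z * Wᴴ with hPdef
  have hZe : Z * diagonal e = Z := by
    have hge : diagonal (fun i => g i * e i) = diagonal g := congrArg diagonal (funext fun k => by
      by_cases h : μ k = 0 <;> simp [hgdef, hedef, h])
    show C * W * diagonal g * diagonal e = Z
    rw [Matrix.mul_assoc (C * W), diagonal_mul_diagonal, hge]

  have hZZ : Zᴴ * Z = diagonal e := by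
    have h0 : Zᴴ * Z = diagonal g * (Wᴴ * (Cᴴ * C) * W) * diagonal g := by
      rw [hZdef]
      simp only [conjTranspose_mul, diagonal_conjTranspose, star_trivial, Matrix.mul_assoc]
    rw [hCC, diagN] at h0
    rw [h0, diagonal_mul_diagonal, diagonal_mul_diagonal]
    refine congrArg diagonal (funext fun k => ?_)
    by_cases h : μ k = 0
    · simp [hgdef, hedef, h]
    · have h1 : Real.sqrt (μ k) ≠ 0 := by
        rw [Real.sqrt_ne_zero']
        exact lt_of_le_of_ne (μnn k) (Ne.symm h)
      have h2 : Real.sqrt (μ k) * Real.sqrt (μ k) = μ k := Real.mul_self_sqrt (μnn k)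
      simp only [hgdef, hedef, if_neg h]
      field_simp
      rw [Real.sq_sqrt (μnn k)]
  have hZCW : Zᴴ * (C * W) = diagonal (fun k => Real.sqrt (μ k)) := by
    have h0 : Zᴴ * (C * W) = diagonal g * (Wᴴ * (Cᴴ * C) * W) := by
      rw [hZdef]
      simp only [conjTranspose_mul, diagonal_conjTranspose, star_trivial, Matrix.mul_assoc]
    rw [hCC, diagN] at h0
    rw [h0, diagonal_mul_diagonal]
    refine congrArg diagonal (funext fun k => ?_)
    by_cases h : μ k = 0
    · simp [hgdef, h]
    · have h1 : Real.sqrt (μ k) ≠ 0 := by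
        rw [Real.sqrt_ne_zero']
        exact lt_of_le_of_ne (μnn k) (Ne.symm h)
      have h2 : Real.sqrt (μ k) * Real.sqrt (μ k) = μ k := Real.mul_self_sqrt (μnn k)
      simp only [hgdef, if_neg h]
      field_simp
      rw [Real.sq_sqrt (μnn k)]
  -- identification of h12.sqrt
  have hDpsd : (W * diagonal (fun k => Real.sqrt (μ k)) * Wᴴ).PosSemidef :=
    (Matrix.posSemidef_diagonal_iff.mpr fun k => Real.sqrt_nonneg _).mul_mul_conjTranspose_same W
  have hDsq : (W * diagonal (fun k => Real.sqrt (μ k)) * Wᴴ) ^ 2 = A * S2 * A := by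
    rw [pow_two, specN]
    have hs : (fun k => Real.sqrt (μ k) * Real.sqrt (μ k)) = μ :=
      funext fun k => Real.mul_self_sqrt (μnn k)
    calc W * diagonal (fun k => Real.sqrt (μ k)) * Wᴴ
          * (W * diagonal (fun k => Real.sqrt (μ k)) * Wᴴ)
        = W * (diagonal (fun k => Real.sqrt (μ k)) *
            (Wᴴ * (W * (diagonal (fun k => Real.sqrt (μ k)) * Wᴴ)))) := by
          simp only [Matrix.mul_assoc]
      _ = W * (diagonal (fun k => Real.sqrt (μ k)) *
            (diagonal (fun k => Real.sqrt (μ k)) * Wᴴ)) := by rw [mul_cancel_left' hWW]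
      _ = W * diagonal μ * Wᴴ := by
          rw [← Matrix.mul_assoc (diagonal _) (diagonal _) Wᴴ, diagonal_mul_diagonal, hs,
            Matrix.mul_assoc]
  have hsqrt_eq : W * diagonal (fun k => Real.sqrt (μ k)) * Wᴴ = h12.sqrt :=
    hDpsd.eq_sqrt_of_sq_eq h12 hDsq
  have t1 : h12.sqrt.trace = ∑ k, Real.sqrt (μ k) := by
    rw [← hsqrt_eq, trace_mul_cycle, hWW, Matrix.one_mul, trace_diagonal]
  have t2 : trace (Pᴴ * C) = ∑ k, Real.sqrt (μ k) := by
    have hPc : Pᴴ = W * Zᴴ := by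
      rw [hPdef, conjTranspose_mul, conjTranspose_conjTranspose]
    rw [hPc, trace_mul_cycle, trace_mul_comm, hZCW, trace_diagonal]
  -- projection facts
  have hPPt : P * Pᴴ = Z * Zᴴ := by
    rw [hPdef, conjTranspose_mul, conjTranspose_conjTranspose]
    simp only [Matrix.mul_assoc]
    rw [mul_cancel_left' hWW]
  have hQ1 : ((1 : Matrix (Fin d) (Fin d) ℝ) - P * Pᴴ).PosSemidef := by
    rw [hPPt]
    apply one_sub_proj_psd
    · simp only [conjTranspose_mul, conjTranspose_conjTranspose]
    · calc Z * Zᴴ * (Z * Zᴴ) = Z * (Zᴴ * Z) * Zᴴ := by simp only [Matrix.mul_assoc]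
        _ = Z * diagonal e * Zᴴ := by rw [hZZ]
        _ = Z * Zᴴ := by rw [hZe]
  have hee : (fun k => e k * e k) = e := funext fun k => by
    by_cases h : μ k = 0 <;> simp [hedef, h]
  have hQ'eq : Pᴴ * P = W * diagonal e * Wᴴ := by
    rw [hPdef, conjTranspose_mul, conjTranspose_conjTranspose]
    rw [show W * Zᴴ * (Z * Wᴴ) = W * ((Zᴴ * Z) * Wᴴ) by simp only [Matrix.mul_assoc], hZZ,
      Matrix.mul_assoc]
  have hQ2 : ((1 : Matrix (Fin d) (Fin d) ℝ) - Pᴴ * P).PosSemidef := by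
    rw [hQ'eq]
    apply one_sub_proj_psd
    · simp only [conjTranspose_mul, conjTranspose_conjTranspose, diagonal_conjTranspose,
        star_trivial, Matrix.mul_assoc]
    · calc W * diagonal e * Wᴴ * (W * diagonal e * Wᴴ)
          = W * (diagonal e * (Wᴴ * (W * (diagonal e * Wᴴ)))) := by simp only [Matrix.mul_assoc]
        _ = W * (diagonal e * (diagonal e * Wᴴ)) := by rw [mul_cancel_left' hWW]
        _ = W * diagonal e * Wᴴ := by
            rw [← Matrix.mul_assoc (diagonal e) (diagonal e) Wᴴ, diagonal_mul_diagonal, hee,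
              Matrix.mul_assoc]
  have hmain := key A B P hA hB hQ1 hQ2
  rw [hCdef] at t2
  -- Frobenius norm identity
  have hfrob : frob (A + B) ^ 2 = trace (A * A) + trace (B * B) + 2 * trace (A * B) := by
    rw [frob, Real.sq_sqrt (by positivity)]
    have hsymm : ∀ i j, (A + B) i j = (A + B) j i := by
      intro i j
      have h : (A + B)ᴴ = A + B := by rw [conjTranspose_add, hA.1, hB.1]
      conv_lhs => rw [← h]
      simp [conjTranspose_apply]
    have expand : trace ((A + B) * (A + B)) =
        trace (A * A) + trace (B * B) + 2 * trace (A * B) := by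
      rw [Matrix.add_mul, Matrix.mul_add, Matrix.mul_add, trace_add, trace_add, trace_add,
        trace_mul_comm B A]
      ring
    rw [← expand]
    simp only [Matrix.trace, Matrix.diag, Matrix.mul_apply]
    exact Finset.sum_congr rfl fun i _ => Finset.sum_congr rfl fun j _ => by
      rw [pow_two, hsymm i j]
  linarith [t1, t2, hmain, hfrob]
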